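/- arXiv:1802.01152 — 2 statements merged into one kernel-verified Lean document; each statement's English description precedes it below -/
import Mathlib

section
/- Let (X, d) be a separable metric space and let μ₁ and μ₂ be Borel probability measures on X. For a Borel probability measure μ and t ≥ 0 write B_t(x) = {x' ∈ X : d(x, x') ≤ t} for the closed metric ball. Suppose that for every natural number r, the pushforward of the (r+1)-fold product measure μ₁^{⊗(r+1)} under the map (x, x₁, …, x_r) ↦ (d(x, x₁), …, d(x, x_r)) ∈ ℝ^r equals the pushforward of μ₂^{⊗(r+1)} under the same map. Then for every natural number m and all t₁, …, t_m ≥ 0, the pushforward of μ₁ under the map x ↦ (μ₁(B_{t₁}(x)), …, μ₁(B_{t_m}(x))) ∈ ℝ^m equals the pushforward of μ₂ under the map x ↦ (μ₂(B_{t₁}(x)), …, μ₂(B_{t_m}(x))). (The finite-dimensional distributions of the process S_μ(t) = μ(B_t(X)), X ∼ μ, are determined by the joint distributions of the distance sequences.) -/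
open MeasureTheory Set
open scoped ENNReal NNReal

section helpers

variable {X : Type*} [MetricSpace X] [TopologicalSpace.SeparableSpace X]
  [MeasurableSpace X] [BorelSpace X]

lemma meas_ball_fun (μ : Measure X) [SFinite μ] (s : ℝ) :
    Measurable fun x => μ {x' | dist x x' ≤ s} := by
  have : SecondCountableTopology X := UniformSpace.secondCountable_of_separable X
  have hs : MeasurableSet {p : X × X | dist p.1 p.2 ≤ s} :=
    (isClosed_le continuous_dist continuous_const).measurableSet
  exact measurable_measure_prodMk_left hs

lemma moment_eq (μ : Measure X) [IsProbabilityMeasure μ] {m : ℕ} (t : Fin m → ℝ)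
    (d : Fin m → ℕ) :
    ∫⁻ x, ∏ j, (μ {x' | dist x x' ≤ t j}) ^ (d j) ∂μ =
      Measure.map (fun p : X × (Fin (Fintype.card ((j : Fin m) × Fin (d j))) → X) =>
          fun i => dist p.1 (p.2 i)) (μ.prod (Measure.pi fun _ => μ))
        {v | ∀ i, v i ≤ t ((Fintype.equivFin ((j : Fin m) × Fin (d j))).symm i).1} := by
  have : SecondCountableTopology X := UniformSpace.secondCountable_of_separable X
  set ι := (j : Fin m) × Fin (d j) with hι
  set r := Fintype.card ι with hr
  set e := Fintype.equivFin ι with he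
  set c : Fin r → Fin m := fun i => (e.symm i).1 with hc
  -- step 1: pointwise product identity
  have step1 : ∀ a : Fin m → ℝ≥0∞, ∏ j, a j ^ d j = ∏ i : Fin r, a (c i) := by
    intro a
    calc ∏ j, a j ^ d j = ∏ j, ∏ _x : Fin (d j), a j := by
          simp [Finset.prod_const]
      _ = ∏ p : ι, a p.1 := by
          rw [← Finset.univ_sigma_univ, Finset.prod_sigma]
      _ = ∏ i : Fin r, a (c i) := (Equiv.prod_comp e.symm fun p => a p.1).symm
  have hT : MeasurableSet {v : Fin r → ℝ | ∀ i, v i ≤ t (c i)} := by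
    have : {v : Fin r → ℝ | ∀ i, v i ≤ t (c i)} = Set.pi Set.univ (fun i => Set.Iic (t (c i))) := by
      ext v; simp [Set.mem_pi, Pi.le_def]
    rw [this]
    exact MeasurableSet.univ_pi fun i => measurableSet_Iic
  have hdv : Measurable (fun p : X × (Fin r → X) => fun i => dist p.1 (p.2 i)) :=
    measurable_pi_lambda _ fun i =>
      measurable_fst.dist ((measurable_pi_apply i).comp measurable_snd)
  have hE : MeasurableSet {p : X × (Fin r → X) | ∀ i, dist p.1 (p.2 i) ≤ t (c i)} :=
    hdv hT
  calc ∫⁻ x, ∏ j, (μ {x' | dist x x' ≤ t j}) ^ (d j) ∂μ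
      = ∫⁻ x, (Measure.pi fun _ : Fin r => μ)
          (Prod.mk x ⁻¹' {p : X × (Fin r → X) | ∀ i, dist p.1 (p.2 i) ≤ t (c i)}) ∂μ := by
        refine lintegral_congr fun x => ?_
        rw [step1]
        have : Prod.mk x ⁻¹' {p : X × (Fin r → X) | ∀ i, dist p.1 (p.2 i) ≤ t (c i)} =
            Set.pi Set.univ (fun i => {x' | dist x x' ≤ t (c i)}) := by
          ext y; simp [Set.mem_pi]
        rw [this, Measure.pi_pi]
    _ = (μ.prod (Measure.pi fun _ : Fin r => μ))
          {p : X × (Fin r → X) | ∀ i, dist p.1 (p.2 i) ≤ t (c i)} :=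
        (Measure.prod_apply hE).symm
    _ = Measure.map (fun p : X × (Fin r → X) => fun i => dist p.1 (p.2 i))
          (μ.prod (Measure.pi fun _ => μ)) {v | ∀ i, v i ≤ t (c i)} := by
        rw [Measure.map_apply hdv hT]; rfl

end helpers

section helpers2

variable {X : Type*} [MetricSpace X] [TopologicalSpace.SeparableSpace X]
  [MeasurableSpace X] [BorelSpace X]

lemma Fmeas (μ : Measure X) [SFinite μ] {m : ℕ} (t : Fin m → ℝ) :
    Measurable (fun x : X => fun j : Fin m => (μ {x' | dist x x' ≤ t j}).toReal) :=
  measurable_pi_lambda _ fun j => (meas_ball_fun μ (t j)).ennreal_toReal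

lemma FmemK (μ : Measure X) [IsProbabilityMeasure μ] {m : ℕ} (t : Fin m → ℝ) (x : X) :
    (fun j : Fin m => (μ {x' | dist x x' ≤ t j}).toReal) ∈ Icc (0 : Fin m → ℝ) 1 := by
  constructor
  · intro j; exact ENNReal.toReal_nonneg
  · intro j
    calc (μ {x' | dist x x' ≤ t j}).toReal ≤ (1 : ℝ≥0∞).toReal :=
          ENNReal.toReal_mono ENNReal.one_ne_top prob_le_one
      _ = 1 := by simp

lemma real_moment (μ : Measure X) [IsProbabilityMeasure μ] {m : ℕ} (t : Fin m → ℝ)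
    (d : Fin m → ℕ) :
    ∫ x, ∏ j, ((μ {x' | dist x x' ≤ t j}).toReal) ^ (d j) ∂μ =
      (∫⁻ x, ∏ j, (μ {x' | dist x x' ≤ t j}) ^ (d j) ∂μ).toReal := by
  have : SecondCountableTopology X := UniformSpace.secondCountable_of_separable X
  have hmeas : Measurable fun x => ∏ j, (μ {x' | dist x x' ≤ t j}) ^ (d j) :=
    Finset.measurable_prod _ fun j _ => (meas_ball_fun μ (t j)).pow_const _
  rw [← integral_toReal hmeas.aemeasurable
    (ae_of_all _ fun x => ENNReal.prod_lt_top fun j _ =>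
      (ENNReal.pow_lt_top (measure_lt_top μ _)))]
  refine integral_congr_ae (ae_of_all _ fun x => ?_)
  simp only [ENNReal.toReal_prod, ENNReal.toReal_pow]

lemma integrable_comp_cm {K : Type*} [TopologicalSpace K] [CompactSpace K]
    (μ : Measure X) [IsProbabilityMeasure μ] [MeasurableSpace K] [BorelSpace K]
    (g : C(K, ℝ)) {F : X → K} (hF : Measurable F) :
    Integrable (fun x => g (F x)) μ := by
  refine Integrable.mono' (integrable_const ‖g‖)
    ((g.continuous.measurable.comp hF).aestronglyMeasurable)
    (ae_of_all _ fun x => g.norm_coe_le_norm _)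

end helpers2

/-- The finite-dimensional distributions of the process `S_μ(t) = μ(B_t(X))`, `X ∼ μ`,
are determined by the joint distributions of the distance sequences. -/
theorem distance_matrix_determines_fdds
    {X : Type*} [MetricSpace X] [TopologicalSpace.SeparableSpace X]
    [MeasurableSpace X] [BorelSpace X]
    (μ₁ μ₂ : Measure X) [IsProbabilityMeasure μ₁] [IsProbabilityMeasure μ₂]
    (h : ∀ r : ℕ,
      Measure.map (fun p : X × (Fin r → X) => fun i : Fin r => dist p.1 (p.2 i))
        (μ₁.prod (Measure.pi fun _ : Fin r => μ₁)) =
      Measure.map (fun p : X × (Fin r → X) => fun i : Fin r => dist p.1 (p.2 i))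
        (μ₂.prod (Measure.pi fun _ : Fin r => μ₂))) :
    ∀ (m : ℕ) (t : Fin m → ℝ), (∀ j, 0 ≤ t j) →
      Measure.map (fun x : X => fun j : Fin m => (μ₁ {x' : X | dist x x' ≤ t j}).toReal) μ₁ =
      Measure.map (fun x : X => fun j : Fin m => (μ₂ {x' : X | dist x x' ≤ t j}).toReal) μ₂ := by
  intro m t _ht
  -- the two vector-valued maps
  set F₁ : X → (Fin m → ℝ) := fun x => fun j => (μ₁ {x' : X | dist x x' ≤ t j}).toReal with hF₁
  set F₂ : X → (Fin m → ℝ) := fun x => fun j => (μ₂ {x' : X | dist x x' ≤ t j}).toReal with hF₂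
  have hF₁m : Measurable F₁ := Fmeas μ₁ t
  have hF₂m : Measurable F₂ := Fmeas μ₂ t
  -- equality of ℝ≥0∞-valued moments
  have momE : ∀ d : Fin m → ℕ,
      ∫⁻ x, ∏ j, (μ₁ {x' | dist x x' ≤ t j}) ^ (d j) ∂μ₁ =
      ∫⁻ x, ∏ j, (μ₂ {x' | dist x x' ≤ t j}) ^ (d j) ∂μ₂ := by
    intro d
    rw [moment_eq μ₁ t d, moment_eq μ₂ t d, h _]
  -- equality of real moments
  have momR : ∀ d : Fin m → ℕ,
      ∫ x, ∏ j, (F₁ x j) ^ (d j) ∂μ₁ = ∫ x, ∏ j, (F₂ x j) ^ (d j) ∂μ₂ := by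
    intro d
    rw [hF₁, hF₂]
    simp only []
    rw [real_moment μ₁ t d, real_moment μ₂ t d, momE d]
  -- the compact cube
  set K : Set (Fin m → ℝ) := Icc 0 1 with hK
  haveI : CompactSpace K := isCompact_iff_compactSpace.mp isCompact_Icc
  set F'₁ : X → K := fun x => ⟨F₁ x, FmemK μ₁ t x⟩ with hF'₁
  set F'₂ : X → K := fun x => ⟨F₂ x, FmemK μ₂ t x⟩ with hF'₂
  have hF'₁m : Measurable F'₁ := hF₁m.subtype_mk
  have hF'₂m : Measurable F'₂ := hF₂m.subtype_mk
  -- coordinate functions and the polynomial subalgebra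
  set coords : Fin m → C(K, ℝ) :=
    fun j => ⟨fun v => (v : Fin m → ℝ) j, (continuous_apply j).comp continuous_subtype_val⟩
    with hcoords
  set A : Subalgebra ℝ C(K, ℝ) := (MvPolynomial.aeval coords).range with hA
  have hsep : A.SeparatesPoints := by
    intro v w hvw
    have : ∃ j, (v : Fin m → ℝ) j ≠ (w : Fin m → ℝ) j := by
      by_contra hcon
      push_neg at hcon
      exact hvw (Subtype.ext (funext hcon))
    obtain ⟨j, hj⟩ := this
    exact ⟨coords j, ⟨coords j, ⟨MvPolynomial.X j, MvPolynomial.aeval_X _ _⟩, rfl⟩, hj⟩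
  -- evaluating elements of A
  have hAeval : ∀ (q : MvPolynomial (Fin m) ℝ) (v : K),
      (MvPolynomial.aeval coords q) v = MvPolynomial.eval (v : Fin m → ℝ) q := by
    intro q v
    have h1 : (ContinuousMap.evalAlgHom (S := ℝ) (R := ℝ) v) (MvPolynomial.aeval coords q) =
        MvPolynomial.aeval (fun j => (coords j) v) q :=
      MvPolynomial.comp_aeval_apply _ _ _
    have h2 : MvPolynomial.aeval (fun j => (coords j) v) q =
        MvPolynomial.eval (fun j => (coords j) v) q := by
      rw [← MvPolynomial.coe_aeval_eq_eval]; rfl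
    exact h1.trans h2
  -- polynomial integrals agree
  have hpoly : ∀ q : MvPolynomial (Fin m) ℝ,
      ∫ x, MvPolynomial.eval (F₁ x) q ∂μ₁ = ∫ x, MvPolynomial.eval (F₂ x) q ∂μ₂ := by
    intro q
    have hint : ∀ (μ : Measure X) (F : X → (Fin m → ℝ)), Measurable F →
        IsProbabilityMeasure μ → (∀ x, F x ∈ K) → ∀ d : Fin m →₀ ℕ,
        Integrable (fun x => MvPolynomial.coeff d q * ∏ j, (F x j) ^ (d j)) μ := by
      intro μ F hFm hμ hFK d
      refine Integrable.mono' (integrable_const |MvPolynomial.coeff d q|)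
        ((measurable_const.mul (Finset.measurable_prod _ fun j _ =>
          ((measurable_pi_apply j).comp hFm).pow_const _)).aestronglyMeasurable)
        (ae_of_all _ fun x => ?_)
      rw [norm_mul, Real.norm_eq_abs, Real.norm_eq_abs]
      have h0 : ∀ j, 0 ≤ F x j := fun j => (hFK x).1 j
      have h1 : ∀ j, F x j ≤ 1 := fun j => (hFK x).2 j
      have hprod0 : (0:ℝ) ≤ ∏ j, (F x j) ^ (d j) :=
        Finset.prod_nonneg fun j _ => pow_nonneg (h0 j) _
      have hprod1 : ∏ j, (F x j) ^ (d j) ≤ 1 :=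
        Finset.prod_le_one (fun j _ => pow_nonneg (h0 j) _)
          (fun j _ => pow_le_one₀ (h0 j) (h1 j))
      calc |MvPolynomial.coeff d q| * |∏ j, (F x j) ^ (d j)|
          ≤ |MvPolynomial.coeff d q| * 1 := by
            refine mul_le_mul_of_nonneg_left ?_ (abs_nonneg _)
            rw [abs_of_nonneg hprod0]; exact hprod1
        _ = |MvPolynomial.coeff d q| := mul_one _
    have expand : ∀ (μ : Measure X) (F : X → (Fin m → ℝ)), Measurable F →
        IsProbabilityMeasure μ → (∀ x, F x ∈ K) →
        ∫ x, MvPolynomial.eval (F x) q ∂μ =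
          ∑ d ∈ q.support, MvPolynomial.coeff d q * ∫ x, ∏ j, (F x j) ^ (d j) ∂μ := by
      intro μ F hFm hμ hFK
      have : ∀ x, MvPolynomial.eval (F x) q =
          ∑ d ∈ q.support, MvPolynomial.coeff d q * ∏ j, (F x j) ^ (d j) := by
        intro x; rw [MvPolynomial.eval_eq']
      simp_rw [this]
      rw [integral_finset_sum _ fun d _ => hint μ F hFm hμ hFK d]
      exact Finset.sum_congr rfl fun d _ => integral_const_mul _ _
    rw [expand μ₁ F₁ hF₁m inferInstance (fun x => FmemK μ₁ t x),
        expand μ₂ F₂ hF₂m inferInstance (fun x => FmemK μ₂ t x)]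
    refine Finset.sum_congr rfl fun d _ => ?_
    rw [momR (fun j => d j)]
  -- integrals of all continuous functions on K agree
  have hcont : ∀ g : C(K, ℝ), ∫ x, g (F'₁ x) ∂μ₁ = ∫ x, g (F'₂ x) ∂μ₂ := by
    intro g
    have key : ∀ ε : ℝ, 0 < ε →
        |∫ x, g (F'₁ x) ∂μ₁ - ∫ x, g (F'₂ x) ∂μ₂| ≤ 2 * ε := by
      intro ε hε
      obtain ⟨p, hp⟩ :=
        ContinuousMap.exists_mem_subalgebra_near_continuousMap_of_separatesPoints A hsep g ε hε
      obtain ⟨q, hq⟩ := p.2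
      have hpv : ∀ v : K, (p : C(K, ℝ)) v = MvPolynomial.eval (v : Fin m → ℝ) q := by
        intro v; rw [← hq]; exact hAeval q v
      have hpmid : ∫ x, (p : C(K, ℝ)) (F'₁ x) ∂μ₁ = ∫ x, (p : C(K, ℝ)) (F'₂ x) ∂μ₂ := by
        simp_rw [hpv]
        exact hpoly q
      have hb : ∀ (F' : X → K), ∀ x, ‖g (F' x) - (p : C(K, ℝ)) (F' x)‖ ≤ ε := by
        intro F' x
        have : ‖(g - (p : C(K, ℝ))) (F' x)‖ ≤ ‖g - (p : C(K, ℝ))‖ :=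
          ContinuousMap.norm_coe_le_norm _ _
        rw [ContinuousMap.sub_apply] at this
        refine this.trans ?_
        rw [← norm_neg]
        simpa [norm_sub_rev] using hp.le
      have hdiff : ∀ (μ : Measure X) (F' : X → K), Measurable F' → IsProbabilityMeasure μ →
          |∫ x, g (F' x) ∂μ - ∫ x, (p : C(K, ℝ)) (F' x) ∂μ| ≤ ε := by
        intro μ F' hF' hμ
        rw [← integral_sub (integrable_comp_cm μ g hF') (integrable_comp_cm μ _ hF')]
        have := norm_integral_le_of_norm_le_const (μ := μ)
          (f := fun x => g (F' x) - (p : C(K, ℝ)) (F' x)) (C := ε)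
          (ae_of_all _ fun x => hb F' x)
        simpa [measure_univ] using this
      calc |∫ x, g (F'₁ x) ∂μ₁ - ∫ x, g (F'₂ x) ∂μ₂|
          = |(∫ x, g (F'₁ x) ∂μ₁ - ∫ x, (p : C(K, ℝ)) (F'₁ x) ∂μ₁) -
              (∫ x, g (F'₂ x) ∂μ₂ - ∫ x, (p : C(K, ℝ)) (F'₂ x) ∂μ₂)| := by
            rw [hpmid]; ring_nf
        _ ≤ |∫ x, g (F'₁ x) ∂μ₁ - ∫ x, (p : C(K, ℝ)) (F'₁ x) ∂μ₁| +
              |∫ x, g (F'₂ x) ∂μ₂ - ∫ x, (p : C(K, ℝ)) (F'₂ x) ∂μ₂| := abs_sub _ _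
        _ ≤ ε + ε := add_le_add (hdiff μ₁ F'₁ hF'₁m inferInstance)
              (hdiff μ₂ F'₂ hF'₂m inferInstance)
        _ = 2 * ε := by ring
    have : |∫ x, g (F'₁ x) ∂μ₁ - ∫ x, g (F'₂ x) ∂μ₂| ≤ 0 := by
      refine le_of_forall_pos_le_add fun ε hε => ?_
      have := key (ε / 2) (by linarith)
      linarith
    have := abs_nonneg (∫ x, g (F'₁ x) ∂μ₁ - ∫ x, g (F'₂ x) ∂μ₂)
    have h0 : |∫ x, g (F'₁ x) ∂μ₁ - ∫ x, g (F'₂ x) ∂μ₂| = 0 := le_antisymm ‹_› ‹_›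
    have := abs_eq_zero.mp h0
    linarith [sub_eq_zero.mp this]
  -- conclude by the uniqueness of finite measures from bounded continuous test functions
  haveI : IsProbabilityMeasure (Measure.map F₁ μ₁) :=
    Measure.isProbabilityMeasure_map hF₁m.aemeasurable
  refine ext_of_forall_lintegral_eq_of_IsFiniteMeasure fun f => ?_
  rw [lintegral_map (f.continuous.measurable.coe_nnreal_ennreal) hF₁m,
      lintegral_map (f.continuous.measurable.coe_nnreal_ennreal) hF₂m]
  have hintf : ∀ (μ : Measure X) (F : X → (Fin m → ℝ)), Measurable F →
      IsProbabilityMeasure μ → Integrable (fun x => ((f (F x) : ℝ≥0) : ℝ)) μ := by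
    intro μ F hFm hμ
    obtain ⟨C, hC⟩ := f.bounded
    refine Integrable.mono' (integrable_const (C + ((f 0 : ℝ≥0) : ℝ)))
      ((NNReal.continuous_coe.comp f.continuous).measurable.comp hFm).aestronglyMeasurable
      (ae_of_all _ fun x => ?_)
    rw [Real.norm_eq_abs, abs_of_nonneg (f (F x)).coe_nonneg]
    have h3 : |((f (F x)) : ℝ) - ((f 0 : ℝ≥0) : ℝ)| ≤ C := by
      rw [← NNReal.dist_eq]; exact hC _ _
    have h2 : ((f (F x)) : ℝ) - ((f 0 : ℝ≥0) : ℝ) ≤ |((f (F x)) : ℝ) - ((f 0 : ℝ≥0) : ℝ)| :=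
      le_abs_self _
    linarith
  rw [lintegral_coe_eq_integral _ (hintf μ₁ F₁ hF₁m inferInstance),
      lintegral_coe_eq_integral _ (hintf μ₂ F₂ hF₂m inferInstance)]
  congr 1
  set g : C(K, ℝ) := ⟨fun v => ((f (v : Fin m → ℝ) : ℝ≥0) : ℝ),
    NNReal.continuous_coe.comp (f.continuous.comp continuous_subtype_val)⟩ with hg
  have e1 : ∀ x, ((f (F₁ x) : ℝ≥0) : ℝ) = g (F'₁ x) := fun x => rfl
  have e2 : ∀ x, ((f (F₂ x) : ℝ≥0) : ℝ) = g (F'₂ x) := fun x => rfl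
  simp_rw [e1, e2]
  exact hcont g
end

section
/- Let (X, d) be a Polish (separable, completely metrizable) metric space and let μ₁ and μ₂ be Borel probability measures on X, each doubling: for j = 1, 2 there exists a finite constant k_j > 0 such that μ_j(B_{2ε}(x)) ≤ k_j μ_j(B_ε(x)) for all ε > 0 and x ∈ X. If μ₁(B) = μ₂(B) for every metric ball B in X, then μ₁(E) = μ₂(E) for every Borel set E ⊆ X; that is, μ₁ = μ₂. -/
open MeasureTheory Metric

private lemma triple_bound {X : Type*} [MetricSpace X] [MeasurableSpace X]
    (μ : Measure X) (k : NNReal)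
    (hd : ∀ ε : ℝ, 0 < ε → ∀ x : X,
      μ (closedBall x (2 * ε)) ≤ (k : ENNReal) * μ (closedBall x ε))
    (x : X) (r : ℝ) (hr : 0 < r) :
    μ (closedBall x (3 * r)) ≤ (k * k : ENNReal) * μ (closedBall x r) := by
  have h1 : μ (closedBall x (3 * r)) ≤ μ (closedBall x (2 * (2 * r))) := by
    apply measure_mono
    apply closedBall_subset_closedBall
    nlinarith
  calc μ (closedBall x (3 * r)) ≤ μ (closedBall x (2 * (2 * r))) := h1
    _ ≤ (k : ENNReal) * μ (closedBall x (2 * r)) := hd (2 * r) (by linarith) x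
    _ ≤ (k : ENNReal) * ((k : ENNReal) * μ (closedBall x r)) := by
        gcongr; exact hd r hr x
    _ = (k * k : ENNReal) * μ (closedBall x r) := by ring

private lemma le_of_agree {X : Type*} [MetricSpace X] [TopologicalSpace.SeparableSpace X]
    [MeasurableSpace X] [BorelSpace X]
    (μ₁ μ₂ : Measure X) [IsFiniteMeasure μ₁] [IsFiniteMeasure μ₂]
    (k₁ : NNReal)
    (hdouble₁ : ∀ ε : ℝ, 0 < ε → ∀ x : X,
      μ₁ (closedBall x (2 * ε)) ≤ (k₁ : ENNReal) * μ₁ (closedBall x ε))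
    (hball : ∀ (x : X) (r : ℝ), μ₁ (closedBall x r) = μ₂ (closedBall x r))
    (s : Set X) : μ₁ s ≤ μ₂ s := by
  have : SecondCountableTopology X := UniformSpace.secondCountable_of_separable X
  have hC : ∀ x : X, ∃ᶠ r in nhdsWithin 0 (Set.Ioi 0),
      μ₁ (closedBall x (3 * r)) ≤ (k₁ * k₁ : NNReal) * μ₁ (closedBall x r) := by
    intro x
    apply Filter.Eventually.frequently
    filter_upwards [self_mem_nhdsWithin] with r hr
    have := triple_bound μ₁ k₁ hdouble₁ x r hr
    simpa [ENNReal.coe_mul] using this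
  set v := Vitali.vitaliFamily μ₁ (k₁ * k₁) hC with hv
  apply v.measure_le_of_frequently_le μ₂ Measure.AbsolutelyContinuous.rfl
  intro x _
  rw [v.frequently_filterAt_iff]
  intro ε hε
  refine ⟨closedBall x ε, ?_, subset_rfl, (hball x ε).le⟩
  refine ⟨isClosed_closedBall, (nonempty_ball.2 hε).mono ball_subset_interior_closedBall,
    ⟨ε, subset_rfl, ?_⟩⟩
  have := triple_bound μ₁ k₁ hdouble₁ x ε hε
  simpa [ENNReal.coe_mul] using this

/-- On a Polish metric space, two doubling Borel probability measures that agree on all metric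
balls are equal. -/
theorem doubling_measures_eq_of_agree_on_balls
    {X : Type*} [MetricSpace X] [TopologicalSpace.SeparableSpace X] [CompleteSpace X]
    [MeasurableSpace X] [BorelSpace X]
    (μ₁ μ₂ : Measure X) [IsProbabilityMeasure μ₁] [IsProbabilityMeasure μ₂]
    (k₁ k₂ : NNReal) (hk₁ : 0 < k₁) (hk₂ : 0 < k₂)
    (hdouble₁ : ∀ ε : ℝ, 0 < ε → ∀ x : X,
      μ₁ (Metric.closedBall x (2 * ε)) ≤ (k₁ : ENNReal) * μ₁ (Metric.closedBall x ε))
    (hdouble₂ : ∀ ε : ℝ, 0 < ε → ∀ x : X,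
      μ₂ (Metric.closedBall x (2 * ε)) ≤ (k₂ : ENNReal) * μ₂ (Metric.closedBall x ε))
    (hball : ∀ (x : X) (r : ℝ), μ₁ (Metric.closedBall x r) = μ₂ (Metric.closedBall x r)) :
    μ₁ = μ₂ := by
  ext s hs
  exact le_antisymm
    (le_of_agree μ₁ μ₂ k₁ hdouble₁ hball s)
    (le_of_agree μ₂ μ₁ k₂ hdouble₂ (fun x r => (hball x r).symm) s)
end
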